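/- Let a : ℝ → ℝ be continuous with a(x) > 0 for all x, let H : ℝ × ℝ → ℝ be continuous and locally Lipschitz in p uniformly in x, and fix λ ∈ ℝ. Let 𝒮_λ be a nonempty family of C¹ solutions of a(x)·u'(x) + H(u(x), x) = λ on ℝ. If 𝒮_λ is compact in C(ℝ) (with the topology of locally uniform convergence), then the pointwise infimum u̲(x) := inf_{u ∈ 𝒮_λ} u(x) and the pointwise supremum ū(x) := sup_{u ∈ 𝒮_λ} u(x) both belong to 𝒮_λ. -/

import Mathlib

open Set Filter

lemma comparison
    (a : ℝ → ℝ) (ha_cont : Continuous a) (ha_pos : ∀ x, 0 < a x)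
    (H : ℝ → ℝ → ℝ)
    (hH_lip : ∀ R > (0 : ℝ), ∃ C : ℝ, ∀ p ∈ Icc (-R) R, ∀ q ∈ Icc (-R) R, ∀ x : ℝ,
      |H p x - H q x| ≤ C * |p - q|)
    (lam : ℝ) (u v : ℝ → ℝ) (u' v' : ℝ → ℝ)
    (hu : ∀ x, HasDerivAt u (u' x) x) (hueq : ∀ x, a x * u' x + H (u x) x = lam)
    (hv : ∀ x, HasDerivAt v (v' x) x) (hveq : ∀ x, a x * v' x + H (v x) x = lam)
    (h0 : u 0 ≤ v 0) : ∀ x, u x ≤ v x := by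
  by_contra h
  push_neg at h
  obtain ⟨x₁, hx₁⟩ := h
  have hucont : Continuous u := continuous_iff_continuousAt.mpr fun x => (hu x).continuousAt
  have hvcont : Continuous v := continuous_iff_continuousAt.mpr fun x => (hv x).continuousAt
  -- a crossing point c with u c = v c
  have hw : Continuous (u - v) := hucont.sub hvcont
  have h0' : (0 : ℝ) ∈ uIcc ((u - v) 0) ((u - v) x₁) := by
    rw [mem_uIcc]
    left
    constructor
    · simpa using h0
    · simp only [Pi.sub_apply]; linarith
  obtain ⟨c, hc, hceq⟩ := intermediate_value_uIcc (f := u - v) hw.continuousOn h0'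
  have hceq' : u c = v c := by
    have : u c - v c = 0 := hceq
    linarith
  -- the interval
  set A : ℝ := min c x₁ - 1 with hA
  set B : ℝ := max c x₁ + 1 with hB
  have hAB : A ≤ B := by
    have := min_le_max (a := c) (b := x₁); dsimp [A, B]; linarith
  have hcAB : c ∈ Ioo A B := by
    constructor
    · have : A ≤ min c x₁ - 1 := le_refl _
      have := min_le_left c x₁; dsimp [A]; linarith
    · have := le_max_left c x₁; dsimp [B]; linarith
  have hx₁AB : x₁ ∈ Icc A B := by
    constructor
    · have := min_le_right c x₁; dsimp [A]; linarith
    · have := le_max_right c x₁; dsimp [B]; linarith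
  -- bound R on u, v over [A,B]
  obtain ⟨Ru, hRu⟩ := (isCompact_Icc (a := A) (b := B)).exists_bound_of_continuousOn
    hucont.continuousOn
  obtain ⟨Rv, hRv⟩ := (isCompact_Icc (a := A) (b := B)).exists_bound_of_continuousOn
    hvcont.continuousOn
  set R : ℝ := max 1 (max Ru Rv) with hRdef
  have hR1 : (0:ℝ) < R := lt_of_lt_of_le one_pos (le_max_left _ _)
  have huR : ∀ t ∈ Icc A B, u t ∈ Icc (-R) R := by
    intro t ht
    have := hRu t ht
    rw [Real.norm_eq_abs, abs_le] at this
    have h1 : Ru ≤ R := le_trans (le_max_left _ _) (le_max_right _ _)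
    constructor <;> [linarith [this.1]; linarith [this.2]]
  have hvR : ∀ t ∈ Icc A B, v t ∈ Icc (-R) R := by
    intro t ht
    have := hRv t ht
    rw [Real.norm_eq_abs, abs_le] at this
    have h1 : Rv ≤ R := le_trans (le_max_right _ _) (le_max_right _ _)
    constructor <;> [linarith [this.1]; linarith [this.2]]
  -- lower bound m on a over [A,B]
  obtain ⟨tm, htm, htmin⟩ := (isCompact_Icc (a := A) (b := B)).exists_isMinOn
    (nonempty_Icc.mpr hAB) ha_cont.continuousOn
  set m : ℝ := a tm with hm
  have hm0 : 0 < m := ha_pos tm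
  have hma : ∀ t ∈ Icc A B, m ≤ a t := fun t ht => htmin ht
  -- Lipschitz constant
  obtain ⟨C, hC⟩ := hH_lip R hR1
  set K : NNReal := ⟨max C 0 / m, by positivity⟩ with hK
  -- clipped time and vector field
  set clip : ℝ → ℝ := fun t => min B (max A t) with hclip
  have hclipmem : ∀ t, clip t ∈ Icc A B := by
    intro t
    constructor
    · exact le_min hAB (le_max_left _ _)
    · exact min_le_left _ _
  have hclipid : ∀ t ∈ Icc A B, clip t = t := by
    intro t ht
    dsimp [clip]
    rw [max_eq_right ht.1, min_eq_right ht.2]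
  set F : ℝ → ℝ → ℝ := fun t p => (lam - H p t) / a (clip t) with hF
  have hlip : ∀ t, LipschitzOnWith K (F t) (Icc (-R) R) := by
    intro t
    rw [lipschitzOnWith_iff_dist_le_mul]
    intro p hp q hq
    have hat : m ≤ a (clip t) := hma _ (hclipmem t)
    have hat0 : 0 < a (clip t) := ha_pos _
    rw [Real.dist_eq, Real.dist_eq]
    have : F t p - F t q = (H q t - H p t) / a (clip t) := by
      dsimp [F]; field_simp; ring
    rw [this, abs_div, abs_of_pos hat0]
    have h1 : |H q t - H p t| ≤ C * |q - p| := hC q hq p hp t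
    have h2 : C * |q - p| ≤ max C 0 * |p - q| := by
      rw [abs_sub_comm q p]
      exact mul_le_mul_of_nonneg_right (le_max_left _ _) (abs_nonneg _)
    have hKc : (K : ℝ) = max C 0 / m := rfl
    rw [hKc]
    rw [div_le_iff₀ hat0] at *
    calc |H q t - H p t| ≤ max C 0 * |p - q| := le_trans h1 h2
      _ ≤ max C 0 / m * |p - q| * a (clip t) := by
          rw [div_mul_eq_mul_div, div_mul_eq_mul_div, le_div_iff₀ hm0]
          have : max C 0 * |p - q| * m ≤ max C 0 * |p - q| * a (clip t) :=
            mul_le_mul_of_nonneg_left hat (by positivity)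
          linarith
  -- u and v solve the ODE for F on Ioo A B
  have huF : ∀ t ∈ Ioo A B, HasDerivAt u (F t (u t)) t := by
    intro t ht
    have hid := hclipid t (Ioo_subset_Icc_self ht)
    have : u' t = F t (u t) := by
      dsimp [F]; rw [hid]
      rw [eq_div_iff (ha_pos t).ne']
      linarith [hueq t]
    rw [← this]; exact hu t
  have hvF : ∀ t ∈ Ioo A B, HasDerivAt v (F t (v t)) t := by
    intro t ht
    have hid := hclipid t (Ioo_subset_Icc_self ht)
    have : v' t = F t (v t) := by
      dsimp [F]; rw [hid]
      rw [eq_div_iff (ha_pos t).ne']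
      linarith [hveq t]
    rw [← this]; exact hv t
  have := ODE_solution_unique_of_mem_Icc (v := F) (s := fun _ => Icc (-R) R) (fun t _ => hlip t) hcAB
    hucont.continuousOn huF (fun t ht => huR t (Ioo_subset_Icc_self ht))
    hvcont.continuousOn hvF (fun t ht => hvR t (Ioo_subset_Icc_self ht)) hceq'
  have := this hx₁AB
  linarith

theorem stmt3
    (a : ℝ → ℝ) (ha_cont : Continuous a) (ha_pos : ∀ x, 0 < a x)
    (H : ℝ → ℝ → ℝ) (hH_cont : Continuous (fun q : ℝ × ℝ => H q.1 q.2))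
    (hH_lip : ∀ R > (0 : ℝ), ∃ C : ℝ, ∀ p ∈ Icc (-R) R, ∀ q ∈ Icc (-R) R, ∀ x : ℝ,
      |H p x - H q x| ≤ C * |p - q|)
    (lam : ℝ) (S : Set C(ℝ, ℝ)) (hne : S.Nonempty) (hcomp : IsCompact S)
    (hsol : ∀ u ∈ S, ∃ u' : ℝ → ℝ, (∀ x, HasDerivAt (u : ℝ → ℝ) (u' x) x) ∧
      Continuous u' ∧ ∀ x, a x * u' x + H (u x) x = lam) :
    (∃ u ∈ S, ∀ x : ℝ, u x = ⨅ v : S, (v : C(ℝ, ℝ)) x) ∧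
    (∃ u ∈ S, ∀ x : ℝ, u x = ⨆ v : S, (v : C(ℝ, ℝ)) x) := by
  have hcmp : ∀ u ∈ S, ∀ v ∈ S, (u : C(ℝ,ℝ)) 0 ≤ v 0 → ∀ x, (u : C(ℝ,ℝ)) x ≤ v x := by
    intro u hu v hv h0
    obtain ⟨u', hu', _, hueq⟩ := hsol u hu
    obtain ⟨v', hv', _, hveq⟩ := hsol v hv
    exact comparison a ha_cont ha_pos H hH_lip lam u v u' v' hu' hueq hv' hveq h0
  have : Nonempty ↑S := hne.to_subtype
  have heval : Continuous (fun f : C(ℝ, ℝ) => f 0) := continuous_eval_const 0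
  constructor
  · obtain ⟨u, huS, hmin⟩ := hcomp.exists_isMinOn hne heval.continuousOn
    refine ⟨u, huS, fun x => ?_⟩
    have hle : ∀ v : S, u x ≤ (v : C(ℝ,ℝ)) x :=
      fun v => hcmp u huS v v.2 (hmin v.2) x
    refine le_antisymm (le_ciInf hle) (ciInf_le (f := fun v : S => (v : C(ℝ,ℝ)) x) ⟨u x, ?_⟩ ⟨u, huS⟩)
    rintro y ⟨v, rfl⟩
    exact hle v
  · obtain ⟨u, huS, hmax⟩ := hcomp.exists_isMaxOn hne heval.continuousOn
    refine ⟨u, huS, fun x => ?_⟩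
    have hle : ∀ v : S, (v : C(ℝ,ℝ)) x ≤ u x :=
      fun v => hcmp v v.2 u huS (hmax v.2) x
    refine le_antisymm (le_ciSup (f := fun v : S => (v : C(ℝ,ℝ)) x) ⟨u x, ?_⟩ ⟨u, huS⟩)
      (ciSup_le hle)
    rintro y ⟨v, rfl⟩
    exact hle v
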